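/- Let U ⊆ ℂ be open, k, l ∈ ℕ, m ∈ ℂ with m ≠ 0 and m ≠ 1, and let h : U → ℂ be holomorphic with derivative h' and with h(z) ∉ {0, 1, m} for all z ∈ U. Suppose there exist holomorphic, nowhere-vanishing functions u, v : U → ℂ with u(z)^(l+1) = h(z) and v(z)^(k+1) = (h(z) − 1)/(h(z) − m) for all z ∈ U. Then for all integers n₀, n₁ ∈ ℤ, the nowhere-vanishing function s(z) := u(z)^(−n₀) · v(z)^(−n₁) satisfies, for every z ∈ U, s'(z) = −( (n₀/(l+1)) · h'(z)/h(z) + (n₁/(k+1)) · ( h'(z)/(h(z)−1) − h'(z)/(h(z)−m) ) ) · s(z). In other words, s is a globally defined parallel section of the pull-back under h of the connection d + (n₀/(l+1)) dz/z + (n₁/(k+1)) (dz/(z−1) − dz/(z−m)), so this pull-back connection has trivial monodromy. -/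

import Mathlib

/-- Coordinate form of the paper's Lemma (Solving-an-ODE): on an open set `U`,
given a holomorphic `h` avoiding `0, 1, m` with derivative `h'`, and holomorphic
nowhere-vanishing `(l+1)`-th resp. `(k+1)`-th roots `u` of `h` and `v` of
`(h-1)/(h-m)`, the function `s = u^(-n₀) * v^(-n₁)` is a nowhere-vanishing
parallel section of the pull-back by `h` of
`d + (n₀/(l+1)) dz/z + (n₁/(k+1)) (dz/(z-1) - dz/(z-m))`,
i.e. `s' = -((n₀/(l+1)) h'/h + (n₁/(k+1)) (h'/(h-1) - h'/(h-m))) s` on `U`. -/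
theorem stmt0 (U : Set ℂ) (hU : IsOpen U) (k l : ℕ) (m : ℂ) (hm0 : m ≠ 0) (hm1 : m ≠ 1)
    (h h' u v : ℂ → ℂ)
    (hh : ∀ z ∈ U, HasDerivAt h (h' z) z)
    (hval : ∀ z ∈ U, h z ≠ 0 ∧ h z ≠ 1 ∧ h z ≠ m)
    (hu : DifferentiableOn ℂ u U) (hv : DifferentiableOn ℂ v U)
    (hu0 : ∀ z ∈ U, u z ≠ 0) (hv0 : ∀ z ∈ U, v z ≠ 0)
    (huh : ∀ z ∈ U, u z ^ (l + 1) = h z)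
    (hvh : ∀ z ∈ U, v z ^ (k + 1) = (h z - 1) / (h z - m))
    (n₀ n₁ : ℤ) :
    ∀ z ∈ U,
      (u z ^ (-n₀) * v z ^ (-n₁) ≠ 0) ∧
      HasDerivAt (fun w => u w ^ (-n₀) * v w ^ (-n₁))
        (-(((n₀ : ℂ) / (l + 1)) * (h' z / h z) +
            ((n₁ : ℂ) / (k + 1)) * (h' z / (h z - 1) - h' z / (h z - m)))
          * (u z ^ (-n₀) * v z ^ (-n₁))) z := by
  intro z hz
  have hUz : U ∈ nhds z := hU.mem_nhds hz
  obtain ⟨hz0, hz1, hzm⟩ := hval z hz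
  have huz := hu0 z hz
  have hvz := hv0 z hz
  have hzm' : h z - m ≠ 0 := sub_ne_zero.2 hzm
  have hz1' : h z - 1 ≠ 0 := sub_ne_zero.2 hz1
  have hl : ((l : ℂ) + 1) ≠ 0 := Nat.cast_add_one_ne_zero l
  have hk : ((k : ℂ) + 1) ≠ 0 := Nat.cast_add_one_ne_zero k
  have hud : HasDerivAt u (deriv u z) z := ((hu z hz).differentiableAt hUz).hasDerivAt
  have hvd : HasDerivAt v (deriv v z) z := ((hv z hz).differentiableAt hUz).hasDerivAt
  set u' := deriv u z with hu'
  set v' := deriv v z with hv'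
  -- relation for u
  have hA : HasDerivAt (fun w => u w ^ (l + 1)) (((l : ℂ) + 1) * u z ^ l * u') z := by
    have := hud.fun_pow (l + 1)
    simpa using this
  have hA' : HasDerivAt (fun w => u w ^ (l + 1)) (h' z) z := by
    apply (hh z hz).congr_of_eventuallyEq
    filter_upwards [hUz] with w hw
    exact huh w hw
  have eqA : h' z = ((l : ℂ) + 1) * u z ^ l * u' := hA'.unique hA
  -- relation for v
  have hB : HasDerivAt (fun w => v w ^ (k + 1)) (((k : ℂ) + 1) * v z ^ k * v') z := by
    have := hvd.fun_pow (k + 1)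
    simpa using this
  have hB' : HasDerivAt (fun w => v w ^ (k + 1))
      ((h' z * (h z - m) - (h z - 1) * h' z) / (h z - m) ^ 2) z := by
    apply HasDerivAt.congr_of_eventuallyEq
      (((hh z hz).sub_const 1).div ((hh z hz).sub_const m) hzm')
    filter_upwards [hUz] with w hw
    exact hvh w hw
  have eqB' : h' z * (h z - m) - (h z - 1) * h' z
      = ((k : ℂ) + 1) * v z ^ k * v' * (h z - m) ^ 2 := by
    have := hB'.unique hB
    rwa [div_eq_iff (pow_ne_zero 2 hzm')] at this
  have key1 : ((l : ℂ) + 1) * h z * u' = h' z * u z := by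
    linear_combination (-(u z)) * eqA - (((l : ℂ) + 1) * u') * (huh z hz)
  have hvh' : v z ^ (k + 1) * (h z - m) = h z - 1 := by
    rw [hvh z hz, div_mul_cancel₀ _ hzm']
  have key2 : ((k : ℂ) + 1) * (h z - 1) * (h z - m) * v' = h' z * (1 - m) * v z := by
    linear_combination (-(v z)) * eqB' - (((k : ℂ) + 1) * v' * (h z - m)) * hvh'
  -- derivative of s
  have hsu : HasDerivAt (fun w => u w ^ (-n₀)) (((-n₀ : ℤ) : ℂ) * u z ^ (-n₀ - 1) * u') z := by
    have := (hasDerivAt_zpow (-n₀) (u z) (Or.inl huz)).comp z hud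
    simpa [Function.comp_def, mul_assoc] using this
  have hsv : HasDerivAt (fun w => v w ^ (-n₁)) (((-n₁ : ℤ) : ℂ) * v z ^ (-n₁ - 1) * v') z := by
    have := (hasDerivAt_zpow (-n₁) (v z) (Or.inl hvz)).comp z hvd
    simpa [Function.comp_def, mul_assoc] using this
  have hs := hsu.fun_mul hsv
  refine ⟨mul_ne_zero (zpow_ne_zero _ huz) (zpow_ne_zero _ hvz), ?_⟩
  convert hs using 1
  on_goal 1 => rfl
  on_goal 1 => rfl
  rw [zpow_sub_one₀ huz, zpow_sub_one₀ hvz]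
  have f1 : ((-n₀ : ℤ) : ℂ) * (u z)⁻¹ * u' = -(((n₀ : ℂ) / ((l : ℂ) + 1)) * (h' z / h z)) := by
    push_cast
    field_simp
    linear_combination (-(n₀ : ℂ)) * key1
  have f2 : ((-n₁ : ℤ) : ℂ) * (v z)⁻¹ * v' =
      -(((n₁ : ℂ) / ((k : ℂ) + 1)) * (h' z / (h z - 1) - h' z / (h z - m))) := by
    push_cast
    field_simp
    linear_combination (-(n₁ : ℂ)) * key2
  push_cast [Int.cast_neg] at f1 f2 ⊢
  linear_combination (-(u z ^ (-n₀) * v z ^ (-n₁))) * f1 +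
    (-(u z ^ (-n₀) * v z ^ (-n₁))) * f2
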